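/- For 0 < λ ≤ λ', the L¹-Wasserstein distance between the Poisson distributions P(λ') and P(λ) on ℕ with the Euclidean metric equals λ' - λ. -/

import Mathlib

open MeasureTheory ProbabilityTheory
open scoped ENNReal NNReal

/-- The L¹-Wasserstein distance (for the Euclidean metric) between two measures on `ℕ`,
defined as the infimum of the transport cost over all couplings. -/
noncomputable def W1Nat (μ ν : Measure ℕ) : ℝ≥0∞ :=
  ⨅ (π : Measure (ℕ × ℕ)) (_ : IsProbabilityMeasure π)
    (_ : π.map Prod.fst = μ) (_ : π.map Prod.snd = ν),
    ∫⁻ p, ENNReal.ofReal |(p.1 : ℝ) - (p.2 : ℝ)| ∂π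

/-- For `0 < λ ≤ λ'`, `W₁(P(λ'), P(λ)) = λ' - λ`. -/
lemma poisson_singleton (r : ℝ≥0) (n : ℕ) :
    poissonMeasure r {n} = ENNReal.ofReal (poissonPMFReal r n) := by
  rw [poissonMeasure_singleton]; rfl

lemma poisson_mean (r : ℝ≥0) : ∫⁻ n, (n : ℝ≥0∞) ∂(poissonMeasure r) = r := by
  rw [lintegral_countable']
  simp_rw [poisson_singleton]
  rw [tsum_eq_zero_add' ENNReal.summable]
  have key : ∀ m : ℕ, ((m + 1 : ℕ) : ℝ≥0∞) * ENNReal.ofReal (poissonPMFReal r (m + 1))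
      = ENNReal.ofReal (r : ℝ) * ENNReal.ofReal (poissonPMFReal r m) := by
    intro m
    rw [← ENNReal.ofReal_natCast, ← ENNReal.ofReal_mul (by positivity),
      ← ENNReal.ofReal_mul (by positivity)]
    congr 1
    unfold poissonPMFReal
    rw [Nat.factorial_succ, pow_succ]
    push_cast
    have h1 : (m.factorial : ℝ) ≠ 0 := by positivity
    field_simp
  simp_rw [key]
  rw [ENNReal.tsum_mul_left]
  have : ∑' m, ENNReal.ofReal (poissonPMFReal r m) = 1 := (poissonPMF r).tsum_coe
  rw [this, mul_one, Nat.cast_zero, zero_mul, zero_add, ENNReal.ofReal_coe_nnreal]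

lemma poisson_real_conv (a b : ℝ≥0) (n : ℕ) :
    ∑ k ∈ Finset.range (n + 1), poissonPMFReal a k * poissonPMFReal b (n - k)
      = poissonPMFReal (a + b) n := by
  unfold poissonPMFReal
  have hab : ((a + b : ℝ≥0) : ℝ) = (a : ℝ) + b := by push_cast; ring
  rw [hab, add_pow]
  rw [Finset.mul_sum, Finset.sum_div]
  refine Finset.sum_congr rfl fun k hk => ?_
  have hk' : k ≤ n := Finset.mem_range_succ_iff.mp hk
  have hnk : ((n.choose k : ℝ)) * (k.factorial : ℝ) * ((n - k).factorial : ℝ)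
      = (n.factorial : ℝ) := by
    exact_mod_cast congrArg (Nat.cast : ℕ → ℝ) (Nat.choose_mul_factorial_mul_factorial hk')
  have h1 : (k.factorial : ℝ) ≠ 0 := by positivity
  have h2 : ((n - k).factorial : ℝ) ≠ 0 := by positivity
  have h3 : (n.factorial : ℝ) ≠ 0 := by positivity
  rw [neg_add, Real.exp_add]
  field_simp
  rw [← hnk]
  ring

lemma poisson_conv (a b : ℝ≥0) :
    ((poissonMeasure a).prod (poissonMeasure b)).map (fun p : ℕ × ℕ => p.1 + p.2)
      = poissonMeasure (a + b) := by
  apply MeasureTheory.Measure.ext_of_singleton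
  intro n
  rw [Measure.map_apply (measurable_of_countable _) (measurableSet_singleton n),
    poisson_singleton,
    Measure.prod_apply ((measurable_of_countable _) (measurableSet_singleton n))]
  have hfib : ∀ x : ℕ, (poissonMeasure b) (Prod.mk x ⁻¹' ((fun p : ℕ × ℕ => p.1 + p.2) ⁻¹' {n}))
      = if x ≤ n then ENNReal.ofReal (poissonPMFReal b (n - x)) else 0 := by
    intro x
    by_cases hx : x ≤ n
    · rw [if_pos hx, ← poisson_singleton]
      congr 1
      ext y
      simp only [Set.mem_preimage, Set.mem_singleton_iff]
      omega
    · rw [if_neg hx]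
      convert measure_empty
      · ext y
        simp only [Set.mem_preimage, Set.mem_singleton_iff, Set.mem_empty_iff_false, iff_false]
        omega
      · infer_instance
  simp_rw [hfib]
  rw [lintegral_countable']
  rw [tsum_eq_sum (s := Finset.range (n + 1))
    (fun x hx => by rw [if_neg (by simpa using hx), zero_mul])]
  rw [← poisson_real_conv a b n,
    ENNReal.ofReal_sum_of_nonneg (fun i _ => mul_nonneg poissonPMFReal_nonneg poissonPMFReal_nonneg)]
  refine Finset.sum_congr rfl fun k hk => ?_
  rw [if_pos (Finset.mem_range_succ_iff.mp hk), poisson_singleton,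
    ← ENNReal.ofReal_mul poissonPMFReal_nonneg, mul_comm]

theorem W1_poisson (lam lam' : ℝ≥0) (h0 : 0 < lam) (hle : lam ≤ lam') :
    W1Nat (poissonMeasure lam') (poissonMeasure lam)
      = ENNReal.ofReal ((lam' : ℝ) - (lam : ℝ)) := by
  have hgoal : ENNReal.ofReal ((lam' : ℝ) - (lam : ℝ)) = ((lam' - lam : ℝ≥0) : ℝ≥0∞) := by
    rw [← NNReal.coe_sub hle, ENNReal.ofReal_coe_nnreal]
  apply le_antisymm
  · -- upper bound via explicit coupling
    set μ := poissonMeasure lam with hμ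
    set ν := poissonMeasure (lam' - lam) with hν
    set T : ℕ × ℕ → ℕ × ℕ := fun q => (q.1 + q.2, q.1) with hTdef
    have hT : Measurable T := measurable_of_countable _
    set π : Measure (ℕ × ℕ) := (μ.prod ν).map T with hπdef
    have hprob : IsProbabilityMeasure π := Measure.isProbabilityMeasure_map hT.aemeasurable
    have h1 : π.map Prod.fst = poissonMeasure lam' := by
      rw [hπdef, Measure.map_map measurable_fst hT]
      have : (Prod.fst ∘ T) = fun q : ℕ × ℕ => q.1 + q.2 := rfl
      rw [this, hμ, hν, poisson_conv, add_tsub_cancel_of_le hle]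
    have h2 : π.map Prod.snd = poissonMeasure lam := by
      rw [hπdef, Measure.map_map measurable_snd hT]
      have : (Prod.snd ∘ T) = (Prod.fst : ℕ × ℕ → ℕ) := rfl
      rw [this, Measure.map_fst_prod, measure_univ, one_smul]
    refine le_trans (iInf_le_of_le π (iInf_le_of_le hprob (iInf_le_of_le h1
      (iInf_le_of_le h2 le_rfl)))) ?_
    have hcost : ∫⁻ p, ENNReal.ofReal |(p.1 : ℝ) - (p.2 : ℝ)| ∂π
        = ∫⁻ q : ℕ × ℕ, (q.2 : ℝ≥0∞) ∂(μ.prod ν) := by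
      rw [hπdef, lintegral_map (measurable_of_countable _) hT]
      refine lintegral_congr fun q => ?_
      simp [hTdef, abs_of_nonneg, ENNReal.ofReal_natCast]
    rw [hcost, lintegral_prod _ (measurable_of_countable _).aemeasurable]
    simp_rw [hν, poisson_mean]
    rw [lintegral_const, measure_univ, mul_one, hgoal]
  · -- lower bound
    refine le_iInf fun π => le_iInf fun hπ => le_iInf fun h1 => le_iInf fun h2 => ?_
    have key : ∀ p : ℕ × ℕ, (p.1 : ℝ≥0∞) - (p.2 : ℝ≥0∞)
        ≤ ENNReal.ofReal |(p.1 : ℝ) - (p.2 : ℝ)| := by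
      intro p
      rw [← ENNReal.ofReal_natCast p.1, ← ENNReal.ofReal_natCast p.2,
        ← ENNReal.ofReal_sub _ (by positivity)]
      exact ENNReal.ofReal_le_ofReal (le_abs_self _)
    have hm1 : ∫⁻ p : ℕ × ℕ, (p.1 : ℝ≥0∞) ∂π = lam' := by
      rw [← lintegral_map (measurable_of_countable _) measurable_fst, h1, poisson_mean]
    have hm2 : ∫⁻ p : ℕ × ℕ, (p.2 : ℝ≥0∞) ∂π = lam := by
      rw [← lintegral_map (measurable_of_countable _) measurable_snd, h2, poisson_mean]
    calc ENNReal.ofReal ((lam' : ℝ) - (lam : ℝ))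
        ≤ (lam' : ℝ≥0∞) - (lam : ℝ≥0∞) := by
          rw [hgoal, ENNReal.coe_sub]
      _ = ∫⁻ p : ℕ × ℕ, (p.1 : ℝ≥0∞) ∂π - ∫⁻ p : ℕ × ℕ, (p.2 : ℝ≥0∞) ∂π := by
          rw [hm1, hm2]
      _ ≤ ∫⁻ p : ℕ × ℕ, ((p.1 : ℝ≥0∞) - (p.2 : ℝ≥0∞)) ∂π := by
          rw [tsub_le_iff_right, ← lintegral_add_right _ (measurable_of_countable _)]
          exact lintegral_mono fun p => le_tsub_add
      _ ≤ _ := lintegral_mono key
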